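/- A regular language L is piecewise testable if and only if there exists a complete NFA recognizing L that is partially ordered and satisfies the unique maximal state (UMS) property. -/

import Mathlib

/-- `subk k w` is the set of scattered subwords of `w` of length at most `k`. -/
def subk {α : Type*} (k : ℕ) (w : List α) : Set (List α) :=
  {u | u.length ≤ k ∧ u.Sublist w}

/-- Two words are `k`-equivalent if they have the same subwords of length at most `k`. -/
def kEquiv {α : Type*} (k : ℕ) (u v : List α) : Prop :=
  subk k u = subk k v

/-- A language is `k`-piecewise testable (Simon's characterization):
`k`-equivalent words are equi-members. -/
def IsPT {α : Type*} (k : ℕ) (L : Language α) : Prop :=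
  ∀ u v : List α, kEquiv k u v → (u ∈ L ↔ v ∈ L)

/-- A DFA is minimal if all states are reachable and pairwise distinguishable. -/
def IsMinimalDFA {α σ : Type*} (A : DFA α σ) : Prop :=
  (∀ q : σ, ∃ w : List α, A.eval w = q) ∧
  ∀ p q : σ,
    (∀ w : List α, (A.evalFrom p w ∈ A.accept ↔ A.evalFrom q w ∈ A.accept)) → p = q

/-- There is a simple path (pairwise distinct states) with `m` transitions in the DFA `A`. -/
def DFAHasSimplePath {α σ : Type*} (A : DFA α σ) (m : ℕ) : Prop :=
  ∃ (qs : Fin (m + 1) → σ) (as : Fin m → α),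
    Function.Injective qs ∧ ∀ i : Fin m, A.step (qs i.castSucc) (as i) = qs i.succ

/-- The depth of a DFA: the number of transitions on a longest simple path. -/
noncomputable def dfaDepth {α σ : Type*} (A : DFA α σ) : ℕ :=
  sSup {m | DFAHasSimplePath A m}

/-- There is a simple path (pairwise distinct states) with `m` transitions in the NFA `A`. -/
def NFAHasSimplePath {α σ : Type*} (A : NFA α σ) (m : ℕ) : Prop :=
  ∃ (qs : Fin (m + 1) → σ) (as : Fin m → α),
    Function.Injective qs ∧ ∀ i : Fin m, qs i.succ ∈ A.step (qs i.castSucc) (as i)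

/-- The depth of an NFA: the number of transitions on a longest simple path. -/
noncomputable def nfaDepth {α σ : Type*} (A : NFA α σ) : ℕ :=
  sSup {m | NFAHasSimplePath A m}

/-- Reachability between states of an NFA. -/
def nfaReach {α σ : Type*} (A : NFA α σ) (p q : σ) : Prop :=
  ∃ w : List α, q ∈ A.evalFrom {p} w

/-- An NFA is partially ordered if its reachability relation is a partial order. -/
def IsPartiallyOrderedNFA {α σ : Type*} (A : NFA α σ) : Prop :=
  ∀ p q : σ, nfaReach A p q → nfaReach A q p → p = q

/-- An NFA is complete if every state has a transition under every letter. -/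
def IsCompleteNFA {α σ : Type*} (A : NFA α σ) : Prop :=
  ∀ (q : σ) (a : α), (A.step q a).Nonempty

/-- `Σ(p)`: the set of letters under which the NFA has a self-loop in `p`. -/
def selfLoopLetters {α σ : Type*} (A : NFA α σ) (p : σ) : Set α :=
  {a | p ∈ A.step p a}

/-- Edge relation of the directed graph `G(A, Γ)` restricted to transitions labeled in `Γ`. -/
def edgeRel {α σ : Type*} (A : NFA α σ) (Γ : Set α) (p q : σ) : Prop :=
  ∃ a ∈ Γ, q ∈ A.step p a

/-- Two states are in the same (weakly) connected component of `G(A, Γ)`. -/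
def sameComponent {α σ : Type*} (A : NFA α σ) (Γ : Set α) (p q : σ) : Prop :=
  Relation.ReflTransGen (fun x y => edgeRel A Γ x y ∨ edgeRel A Γ y x) p q

/-- Directed reachability within `G(A, Γ)`. -/
def reachIn {α σ : Type*} (A : NFA α σ) (Γ : Set α) (p q : σ) : Prop :=
  Relation.ReflTransGen (edgeRel A Γ) p q

/-- A state is maximal in `G(A, Γ)` if nothing strictly above it is reachable from it. -/
def IsMaximalIn {α σ : Type*} (A : NFA α σ) (Γ : Set α) (q : σ) : Prop :=
  ∀ r : σ, reachIn A Γ q r → reachIn A Γ r q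

/-- The unique maximal state (UMS) property: every state `p` is the unique maximal
state of the connected component of `G(A, Σ(p))` containing `p`. -/
def HasUMS {α σ : Type*} (A : NFA α σ) : Prop :=
  ∀ p q : σ, sameComponent A (selfLoopLetters A p) p q →
    (IsMaximalIn A (selfLoopLetters A p) q ↔ q = p)

namespace PTaux

open List

variable {β : Type*} {β' : Type*}

theorem mem_subk {k : ℕ} {x w : List β} : x ∈ subk k w ↔ x.length ≤ k ∧ x <+ w := Iff.rfl

theorem kEquiv.refl (k : ℕ) (u : List β) : kEquiv k u u := rfl

theorem kEquiv.symm' {k : ℕ} {u v : List β} (h : kEquiv k u v) : kEquiv k v u := h.symm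

theorem kEquiv.trans' {k : ℕ} {u v w : List β} (h : kEquiv k u v) (h' : kEquiv k v w) :
    kEquiv k u w := h.trans h'

/-- right congruence -/
theorem kEquiv_append_right {k : ℕ} {u v : List β} (h : kEquiv k u v) (w : List β) :
    kEquiv k (u ++ w) (v ++ w) := by
  have key : ∀ {u' v' : List β}, kEquiv k u' v' → ∀ x ∈ subk k (u' ++ w), x ∈ subk k (v' ++ w) := by
    rintro u' v' h' x ⟨hlen, hx⟩
    rcases List.sublist_append_iff.1 hx with ⟨l₁, l₂, rfl, h₁, h₂⟩
    have hl₁ : l₁ ∈ subk k u' := ⟨le_trans (by simp) hlen, h₁⟩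
    rw [h'] at hl₁
    exact ⟨hlen, List.sublist_append_iff.2 ⟨l₁, l₂, rfl, hl₁.2, h₂⟩⟩
  exact Set.eq_of_subset_of_subset (fun x hx => key h x hx) (fun x hx => key (kEquiv.symm' h) x hx)

/-- left congruence -/
theorem kEquiv_append_left {k : ℕ} {u v : List β} (h : kEquiv k u v) (w : List β) :
    kEquiv k (w ++ u) (w ++ v) := by
  have key : ∀ {u' v' : List β}, kEquiv k u' v' → ∀ x ∈ subk k (w ++ u'), x ∈ subk k (w ++ v') := by
    rintro u' v' h' x ⟨hlen, hx⟩
    rcases List.sublist_append_iff.1 hx with ⟨l₁, l₂, rfl, h₁, h₂⟩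
    have hl₂ : l₂ ∈ subk k u' := ⟨le_trans (by simp) hlen, h₂⟩
    rw [h'] at hl₂
    exact ⟨hlen, List.sublist_append_iff.2 ⟨l₁, l₂, rfl, h₁, hl₂.2⟩⟩
  exact Set.eq_of_subset_of_subset (fun x hx => key h x hx) (fun x hx => key (kEquiv.symm' h) x hx)

/-- `pw γ n` is `γ^n`. -/
def pw (γ : List β) : ℕ → List β
  | 0 => []
  | n + 1 => γ ++ pw γ n

theorem sublist_pw {x γ : List β} : ∀ {n : ℕ}, x.length ≤ n → (∀ b ∈ x, b ∈ γ) → x <+ pw γ n := by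
  induction x with
  | nil => intro n _ _; exact List.nil_sublist _
  | cons b x ih =>
    intro n hlen hmem
    match n with
    | n + 1 =>
      have : ([b] ++ x) <+ γ ++ pw γ n :=
        List.Sublist.append (List.singleton_sublist.2 (hmem b (by simp)))
          (ih (Nat.le_of_succ_le_succ hlen) (fun c hc => hmem c (by simp [hc])))
      simpa [pw] using this

theorem pw_letters {γ : List β} : ∀ {n : ℕ} {b : β}, b ∈ pw γ n → b ∈ γ := by
  intro n
  induction n with
  | zero => intro b hb; simp [pw] at hb
  | succ n ih =>
    intro b hb
    rcases List.mem_append.1 hb with h | h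
    · exact h
    · exact ih h

theorem subk_full {k : ℕ} {w γ : List β} (hsub : pw γ k <+ w) (halph : ∀ b ∈ w, b ∈ γ) :
    subk k w = {x | x.length ≤ k ∧ ∀ b ∈ x, b ∈ γ} := by
  ext x
  constructor
  · rintro ⟨hlen, hx⟩
    exact ⟨hlen, fun b hb => halph b (hx.subset hb)⟩
  · rintro ⟨hlen, hx⟩
    exact ⟨hlen, (sublist_pw hlen hx).trans hsub⟩

/-- absorb a word over `γ`'s alphabet on the right of `γ^k`. -/
theorem kEquiv_pad_right {k : ℕ} {γ z : List β} (hz : ∀ b ∈ z, b ∈ γ) :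
    kEquiv k (pw γ k ++ z) (pw γ k) := by
  unfold kEquiv
  rw [subk_full (w := pw γ k ++ z) (List.sublist_append_left _ _)
      (fun b hb => by rcases List.mem_append.1 hb with h | h; exacts [pw_letters h, hz b h]),
    subk_full (w := pw γ k) (List.Sublist.refl _) (fun b hb => pw_letters hb)]

/-- absorb a word over `γ`'s alphabet on the left of `γ^k`. -/
theorem kEquiv_pad_left {k : ℕ} {γ z : List β} (hz : ∀ b ∈ z, b ∈ γ) :
    kEquiv k (z ++ pw γ k) (pw γ k) := by
  unfold kEquiv
  rw [subk_full (w := z ++ pw γ k) (List.sublist_append_right _ _)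
      (fun b hb => by rcases List.mem_append.1 hb with h | h; exacts [hz b h, pw_letters h]),
    subk_full (w := pw γ k) (List.Sublist.refl _) (fun b hb => pw_letters hb)]

/-- transport of `kEquiv` along an equivalence of alphabets. -/
theorem kEquiv_map (e : β ≃ β') {k : ℕ} {u v : List β} (h : kEquiv k u v) :
    kEquiv k (u.map e) (v.map e) := by
  have sub_map : ∀ (x : List β') (w : List β), x <+ w.map e ↔ x.map e.symm <+ w := by
    intro x w
    constructor
    · intro hx
      have := hx.map e.symm
      simpa using this
    · intro hx
      have := hx.map e
      simpa using this
  have key : ∀ {u' v' : List β}, kEquiv k u' v' →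
      ∀ x ∈ subk k (u'.map e), x ∈ subk k (v'.map e) := by
    rintro u' v' h' x ⟨hlen, hx⟩
    have hx' : x.map e.symm ∈ subk k u' := ⟨by simpa using hlen, (sub_map x u').1 hx⟩
    rw [h'] at hx'
    exact ⟨hlen, (sub_map x v').2 hx'.2⟩
  exact Set.eq_of_subset_of_subset (fun x hx => key h x hx) (fun x hx => key (kEquiv.symm' h) x hx)


end PTaux

namespace PTaux

/-- the setoid of `k`-equivalence. -/
def kSetoid (β : Type*) (k : ℕ) : Setoid (List β) :=
  ⟨kEquiv k, ⟨kEquiv.refl k, kEquiv.symm', kEquiv.trans'⟩⟩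

theorem forward {α : Type*} [Fintype α] (L : Language α) (k : ℕ) (hPT : IsPT k L) :
    ∃ (σ : Type) (_ : Fintype σ) (A : NFA α σ),
      A.accepts = L ∧ IsCompleteNFA A ∧ IsPartiallyOrderedNFA A ∧ HasUMS A := by
  classical
  set β := Fin (Fintype.card α) with hβ
  set e : α ≃ β := Fintype.equivFin α with he
  set s : Setoid (List β) := kSetoid β k with hs
  set σ : Type := Quotient s with hσ
  have mk_eq : ∀ {w₁ w₂ : List β}, kEquiv k w₁ w₂ → (⟦w₁⟧ : σ) = ⟦w₂⟧ := fun h => Quotient.sound h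
  have exact' : ∀ {w₁ w₂ : List β}, (⟦w₁⟧ : σ) = ⟦w₂⟧ → kEquiv k w₁ w₂ := fun h => Quotient.exact h
  -- finiteness
  have hfin : Finite σ := by
    have hL : {l : List β | l.length ≤ k}.Finite := List.finite_length_le β k
    haveI : Finite {l : List β // l.length ≤ k} := hL.to_subtype
    let φ : σ → Set {l : List β // l.length ≤ k} :=
      Quotient.lift (fun w => {x : {l : List β // l.length ≤ k} | (x : List β) ∈ subk k w})
        (by intro w₁ w₂ h
            show {x : {l : List β // l.length ≤ k} | (x : List β) ∈ subk k w₁} = {x : {l : List β // l.length ≤ k} | (x : List β) ∈ subk k w₂}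
            rw [show subk k w₁ = subk k w₂ from (h : kEquiv k w₁ w₂)])
    have hφ : Function.Injective φ := by
      intro c₁ c₂ hc
      induction c₁ using Quotient.ind
      induction c₂ using Quotient.ind
      rename_i w₁ w₂
      refine mk_eq ?_
      ext x
      constructor
      · intro hx
        have hxl : x.length ≤ k := hx.1
        have : (⟨x, hxl⟩ : {l : List β // l.length ≤ k}) ∈ φ ⟦w₁⟧ := hx
        rw [hc] at this
        exact this
      · intro hx
        have hxl : x.length ≤ k := hx.1
        have : (⟨x, hxl⟩ : {l : List β // l.length ≤ k}) ∈ φ ⟦w₂⟧ := hx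
        rw [← hc] at this
        exact this
    exact Finite.of_injective φ hφ
  -- the canonical DFA
  let D : DFA α σ :=
    { step := fun c a => Quotient.lift (fun w => (⟦w ++ [e a]⟧ : σ))
        (fun w₁ w₂ h => mk_eq (kEquiv_append_right (h : kEquiv k w₁ w₂) _)) c
      start := ⟦[]⟧
      accept := {c | Quotient.lift (fun w => w.map e.symm ∈ L)
        (fun w₁ w₂ h => propext (hPT _ _ (kEquiv_map e.symm (h : kEquiv k w₁ w₂)))) c} }
  have stepD : ∀ (w : List β) (a : α), D.step ⟦w⟧ a = ⟦w ++ [e a]⟧ := fun _ _ => rfl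
  have evalD : ∀ (x : List α) (w : List β), D.evalFrom ⟦w⟧ x = ⟦w ++ x.map e⟧ := by
    intro x
    induction x with
    | nil =>
      intro w
      show (⟦w⟧ : σ) = ⟦w ++ List.map (⇑e) []⟧
      rw [List.map_nil, List.append_nil]
    | cons a x ih =>
      intro w
      have h1 : D.evalFrom ⟦w⟧ (a :: x) = D.evalFrom (D.step ⟦w⟧ a) x := rfl
      rw [h1, stepD, ih, List.map_cons, List.append_assoc, List.singleton_append]
  let A : NFA α σ := D.toNFA
  have stepA : ∀ (c : σ) (a : α), A.step c a = {D.step c a} := fun _ _ => rfl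
  have memstepA : ∀ (c c' : σ) (a : α), c' ∈ A.step c a ↔ c' = D.step c a := by
    intro c c' a; rw [stepA]; exact Set.mem_singleton_iff
  -- reachability characterization
  have reachA : ∀ (c c' : σ), nfaReach A c c' ↔ ∃ x : List α, D.evalFrom c x = c' := by
    intro c c'
    constructor
    · rintro ⟨x, hx⟩
      rw [show A.evalFrom {c} x = {D.evalFrom c x} from D.toNFA_evalFrom_match c x] at hx
      exact ⟨x, (Set.mem_singleton_iff.1 hx).symm⟩
    · rintro ⟨x, hx⟩
      exact ⟨x, by
        rw [show A.evalFrom {c} x = {D.evalFrom c x} from D.toNFA_evalFrom_match c x, hx]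
        rfl⟩
  -- partial order
  have hpo : IsPartiallyOrderedNFA A := by
    intro cp cq h1 h2
    rcases (reachA _ _).1 h1 with ⟨x, hx⟩
    rcases (reachA _ _).1 h2 with ⟨y, hy⟩
    induction cp using Quotient.ind
    rename_i u
    rw [evalD] at hx
    subst hx
    rw [evalD] at hy
    have e1 : subk k u ⊆ subk k (u ++ x.map e) :=
      fun z hz => ⟨hz.1, hz.2.trans (List.sublist_append_left _ _)⟩
    have e2 : subk k (u ++ x.map e) ⊆ subk k ((u ++ x.map e) ++ y.map e) :=
      fun z hz => ⟨hz.1, hz.2.trans (List.sublist_append_left _ _)⟩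
    have e3 : subk k ((u ++ x.map e) ++ y.map e) = subk k u := exact' hy
    exact mk_eq (Set.eq_of_subset_of_subset e1 (e3 ▸ e2))
  have reach_of_reachIn : ∀ (Γ' : Set α) (c c' : σ), reachIn A Γ' c c' → nfaReach A c c' := by
    intro Γ' c c' h
    induction h with
    | refl => exact ⟨[], by show c ∈ A.evalFrom {c} []; exact rfl⟩
    | @tail b c'' hcb hbc ih =>
      rcases ih with ⟨x, hx⟩
      rcases hbc with ⟨a, _, hmem⟩
      refine ⟨x ++ [a], ?_⟩
      rw [NFA.evalFrom_append, NFA.evalFrom_singleton]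
      show c'' ∈ A.stepSet (A.evalFrom {c} x) a
      rw [NFA.mem_stepSet]
      exact ⟨b, hx, hmem⟩
  refine ⟨σ, Fintype.ofFinite σ, A, ?_, ?_, hpo, ?_⟩
  · -- accepts = L
    ext x
    rw [show A.accepts = D.accepts from D.toNFA_correct]
    rw [DFA.mem_accepts]
    have hx : D.eval x = ⟦x.map e⟧ := by
      show D.evalFrom ⟦([] : List β)⟧ x = _
      rw [evalD, List.nil_append]
    rw [hx]
    show (x.map e).map e.symm ∈ L ↔ x ∈ L
    rw [List.map_map]
    simp
  · -- complete
    intro q a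
    rw [stepA]
    exact ⟨D.step q a, rfl⟩
  · -- UMS
    intro p q hcomp
    set Γ : Set α := selfLoopLetters A p with hΓ
    have loopΓ : ∀ a, a ∈ Γ ↔ D.step p a = p := by
      intro a
      rw [hΓ]
      show p ∈ A.step p a ↔ _
      rw [memstepA]
      exact eq_comm
    -- the list of self-loop letters, as β-letters
    set γ : List β := (Finset.univ : Finset β).toList.filter
      (fun b => D.step p (e.symm b) = p) with hγdef
    have hγ₁ : ∀ b ∈ γ, D.step p (e.symm b) = p := by
      intro b hb
      have := List.mem_filter.1 hb
      exact of_decide_eq_true this.2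
    have hγ₂ : ∀ a ∈ Γ, e a ∈ γ := by
      intro a ha
      refine List.mem_filter.2 ⟨by simp, decide_eq_true ?_⟩
      simpa using (loopΓ a).1 ha
    -- closure operator
    let cl : σ → σ := Quotient.lift (fun w => (⟦w ++ pw γ k⟧ : σ))
      (fun w₁ w₂ h => mk_eq (kEquiv_append_right (h : kEquiv k w₁ w₂) _))
    have clmk : ∀ w : List β, cl ⟦w⟧ = ⟦w ++ pw γ k⟧ := fun _ => rfl
    -- a state stable under all γ-letters is fixed by cl
    have stable_fix : ∀ (c : σ), (∀ b ∈ γ, D.step c (e.symm b) = c) → cl c = c := by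
      intro c hstab
      induction c using Quotient.ind
      rename_i w
      rw [clmk]
      have key : ∀ (z : List β), (∀ b ∈ z, b ∈ γ) →
          ∀ (w' : List β), (∀ b ∈ γ, D.step ⟦w'⟧ (e.symm b) = ⟦w'⟧) → (⟦w' ++ z⟧ : σ) = ⟦w'⟧ := by
        intro z
        induction z with
        | nil => intro _ w' _; rw [List.append_nil]
        | cons b z ih =>
          intro hz w' hw'
          have hb : b ∈ γ := hz b (by simp)
          have h1 : (⟦w' ++ [b]⟧ : σ) = ⟦w'⟧ := by
            have h := hw' b hb
            rw [stepD] at h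
            rw [show (e (e.symm b)) = b from e.apply_symm_apply b] at h
            exact h
          have h2 : (⟦(w' ++ [b]) ++ z⟧ : σ) = ⟦w' ++ [b]⟧ := by
            refine ih (fun c hc => hz c (by simp [hc])) (w' ++ [b]) ?_
            intro c hc
            rw [stepD]
            have step1 : (⟦w' ++ [b] ++ [e (e.symm c)]⟧ : σ) = ⟦w' ++ [e (e.symm c)]⟧ :=
              mk_eq (kEquiv_append_right (exact' h1) _)
            rw [step1]
            have h := hw' c hc
            rw [stepD] at h
            rw [h, h1]
          calc (⟦w' ++ b :: z⟧ : σ) = ⟦(w' ++ [b]) ++ z⟧ := by rw [List.append_cons]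
            _ = ⟦w' ++ [b]⟧ := h2
            _ = ⟦w'⟧ := h1
      exact key (pw γ k) (fun b hb => pw_letters hb) w hstab
    -- cl is constant along Γ-edges
    have cl_edge : ∀ (c : σ) (a : α), a ∈ Γ → cl (D.step c a) = cl c := by
      intro c a ha
      induction c using Quotient.ind
      rename_i w
      rw [stepD, clmk, clmk]
      refine mk_eq ?_
      have h1 : kEquiv k ([e a] ++ pw γ k) (pw γ k) :=
        kEquiv_pad_left (by intro b hb; simp at hb; subst hb; exact hγ₂ a ha)
      calc subk k (w ++ [e a] ++ pw γ k) = subk k (w ++ ([e a] ++ pw γ k)) := by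
            rw [List.append_assoc]
        _ = subk k (w ++ pw γ k) := kEquiv_append_left h1 w
    have cl_comp : ∀ (c : σ), sameComponent A Γ p c → cl p = cl c := by
      intro c hc
      induction hc with
      | refl => rfl
      | @tail b c'' hpb hbc ih =>
        rcases hbc with ⟨a, ha, hmem⟩ | ⟨a, ha, hmem⟩
        · rw [memstepA] at hmem
          rw [ih, hmem, cl_edge b a ha]
        · rw [memstepA] at hmem
          rw [ih, ← cl_edge c'' a ha, ← hmem]
    constructor
    · -- maximal → q = p
      intro hmax
      have hstab : ∀ b ∈ γ, D.step q (e.symm b) = q := by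
        intro b hb
        have haΓ : (e.symm b) ∈ Γ := (loopΓ _).2 (hγ₁ b hb)
        have hedge : reachIn A Γ q (D.step q (e.symm b)) :=
          Relation.ReflTransGen.single ⟨e.symm b, haΓ, by rw [memstepA]⟩
        have hback := hmax _ hedge
        exact hpo _ _ (reach_of_reachIn Γ _ _ hback) (reach_of_reachIn Γ _ _ hedge)
      have h1 : cl q = q := stable_fix q hstab
      have h2 : cl p = p := stable_fix p hγ₁
      rw [← h1, ← cl_comp q hcomp, h2]
    · -- q = p → maximal
      intro hq
      subst hq
      have only_p : ∀ r, reachIn A Γ q r → r = q := by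
        intro r hr
        induction hr with
        | refl => rfl
        | @tail b c'' hqb hbc ih =>
          subst ih
          rcases hbc with ⟨a, ha, hmem⟩
          rw [memstepA] at hmem
          rw [hmem, (loopΓ a).1 ha]
      intro r hr
      rw [only_p r hr]
      exact Relation.ReflTransGen.refl

end PTaux


namespace PTaux
open List
variable {β : Type*}

theorem kEquiv_mono {j k : ℕ} (hjk : j ≤ k) {u v : List β} (h : kEquiv k u v) :
    kEquiv j u v := by
  have key : ∀ {u' v' : List β}, kEquiv k u' v' → ∀ x ∈ subk j u', x ∈ subk j v' := by
    rintro u' v' h' x ⟨hl, hx⟩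
    have : x ∈ subk k u' := ⟨le_trans hl hjk, hx⟩
    rw [h'] at this
    exact ⟨hl, this.2⟩
  exact Set.eq_of_subset_of_subset (fun x hx => key h x hx) (fun x hx => key h.symm x hx)

theorem kEquiv_sublist_iff {k : ℕ} {u v : List β} (h : kEquiv k u v) {x : List β}
    (hx : x.length ≤ k) : (x <+ u ↔ x <+ v) := by
  constructor
  · intro hs
    have : x ∈ subk k u := ⟨hx, hs⟩
    rw [h] at this; exact this.2
  · intro hs
    have : x ∈ subk k v := ⟨hx, hs⟩
    rw [← h] at this; exact this.2

theorem kEquiv_mem_iff {k : ℕ} {u v : List β} (h : kEquiv k u v) (hk : 1 ≤ k) (a : β) :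
    a ∈ u ↔ a ∈ v := by
  have h1 := kEquiv_sublist_iff h (x := [a]) (by simpa using hk)
  simp only [List.singleton_sublist] at h1
  exact h1

/-- greedy matching: dropping the first occurrence -/
theorem sublist_cut {c : β} {x P S : List β} (hP : c ∉ P) (h : c :: x <+ P ++ c :: S) :
    x <+ S := by
  induction P with
  | nil =>
    simp only [List.nil_append] at h
    rcases (List.cons_sublist_cons (a := c)).1 <| h with h'
    · exact h'
  | cons d P ih =>
    simp only [List.cons_append] at h
    rcases (List.sublist_cons_iff).1 h with h' | ⟨r, hr, hr'⟩
    · exact ih (fun hc => hP (List.mem_cons_of_mem d hc)) h'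
    · exfalso
      have : c = d := by
        have h2 := congrArg (fun l => l.head?) hr
        simp only [List.head?_cons] at h2
        exact (Option.some_injective _ h2)
      exact hP (this ▸ (List.mem_cons_self (a := c) (l := P)))

/-- building a sublist through the first occurrence -/
theorem sublist_build {c : β} {x P S : List β} (h : x <+ S) : c :: x <+ P ++ c :: S :=
  ((List.cons_sublist_cons).2 h).trans (List.sublist_append_right P (c :: S))

/-- cutting at the first occurrence of a common letter preserves `kEquiv` up to one level -/
theorem kEquiv_zero (u v : List β) : kEquiv 0 u v := by
  have : ∀ w : List β, subk 0 w = {[]} := by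
    intro w
    ext x
    constructor
    · rintro ⟨hl, _⟩
      simpa using List.length_eq_zero_iff.1 (Nat.le_zero.1 hl)
    · rintro h
      rcases h with rfl
      exact ⟨by simp, List.nil_sublist w⟩
  show subk 0 u = subk 0 v
  rw [this u, this v]

theorem kEquiv_cut {K : ℕ} {c : β} {P Q X Y : List β} (hP : c ∉ P) (hQ : c ∉ Q)
    (h : kEquiv K (P ++ c :: X) (Q ++ c :: Y)) : kEquiv (K - 1) X Y := by
  rcases Nat.eq_zero_or_pos K with rfl | hK
  · exact kEquiv_zero X Y
  have key : ∀ {P' Q' X' Y' : List β}, c ∉ P' → c ∉ Q' →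
      kEquiv K (P' ++ c :: X') (Q' ++ c :: Y') → ∀ x ∈ subk (K-1) X', x ∈ subk (K-1) Y' := by
    rintro P' Q' X' Y' hP' hQ' h' x ⟨hl, hx⟩
    have h1 : c :: x <+ P' ++ c :: X' := sublist_build hx
    have h2 : (c :: x).length ≤ K := by
      simp only [List.length_cons]
      omega
    have h3 : c :: x <+ Q' ++ c :: Y' := (kEquiv_sublist_iff h' h2).1 h1
    exact ⟨hl, sublist_cut hQ' h3⟩
  exact Set.eq_of_subset_of_subset (fun x hx => key hP hQ h x hx)
    (fun x hx => key hQ hP h.symm x hx)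

theorem sublist_cons_cases {x : List β} {c : β} {W : List β} (h : x <+ c :: W) :
    x <+ W ∨ ∃ x', x = c :: x' ∧ x' <+ W := by
  rcases List.sublist_cons_iff.1 h with h' | ⟨r, hr, hr'⟩
  · exact Or.inl h'
  · exact Or.inr ⟨r, hr, hr'⟩

/-- from `aW ∼ bW` (`a ≠ b`), the head can be dropped -/
theorem kEquiv_drop_head {S : ℕ} {a b : β} (hab : a ≠ b) {W : List β}
    (h : kEquiv S (a :: W) (b :: W)) : kEquiv (S - 1) (a :: W) W := by
  have key : ∀ x ∈ subk (S-1) (a :: W), x ∈ subk (S-1) W := by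
    rintro x ⟨hl, hx⟩
    refine ⟨hl, ?_⟩
    rcases sublist_cons_cases hx with h' | ⟨x', rfl, hx'⟩
    · exact h'
    · have h1 : a :: x' <+ b :: W := (kEquiv_sublist_iff h (by omega)).1 hx
      rcases sublist_cons_cases h1 with h'' | ⟨x'', hx'', _⟩
      · exact h''
      · exact absurd (by injection hx'' : a = b) hab
  refine Set.eq_of_subset_of_subset (fun x hx => key x hx) ?_
  rintro x ⟨hl, hx⟩
  exact ⟨hl, hx.trans (List.sublist_cons_self a W)⟩

/-- padding with a two-letter alternating word -/
theorem kEquiv_pad {S : ℕ} {a b : β} (hab : a ≠ b) {W : List β}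
    (h : kEquiv S (a :: W) (b :: W)) :
    ∀ (x : List β), (∀ c ∈ x, c = a ∨ c = b) → kEquiv (S - 1 - x.length) (x ++ W) W := by
  intro x
  induction x with
  | nil => intro _; rfl
  | cons c x ih =>
    intro hc
    have hxW : kEquiv (S - 1 - x.length) (x ++ W) W := ih (fun d hd => hc d (by simp [hd]))
    have h1 : kEquiv (S - 1 - x.length) (c :: (x ++ W)) (c :: W) := by
      have := kEquiv_append_left hxW [c]
      simpa using this
    have h2 : kEquiv (S - 1) (c :: W) W := by
      rcases hc c (by simp) with rfl | rfl
      · exact kEquiv_drop_head hab h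
      · exact kEquiv_drop_head (Ne.symm hab) h.symm
    have h3 : kEquiv (S - 1 - (x.length + 1)) (c :: (x ++ W)) (c :: W) :=
      kEquiv_mono (by omega) h1
    have h4 : kEquiv (S - 1 - (x.length + 1)) (c :: W) W := kEquiv_mono (by omega) h2
    simpa using kEquiv.trans' h3 h4

end PTaux

namespace PTback

variable {α : Type*} {σ : Type*} (A : NFA α σ)

/-- evalFrom distributes over unions of start sets -/
theorem evalFrom_mem_iff (S : Set σ) (w : List α) (q : σ) :
    q ∈ A.evalFrom S w ↔ ∃ s ∈ S, q ∈ A.evalFrom {s} w := by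
  induction w generalizing S with
  | nil =>
    constructor
    · intro h; exact ⟨q, h, rfl⟩
    · rintro ⟨s, hs, h⟩
      have : q = s := h
      subst this; exact hs
  | cons a w ih =>
    have h1 : A.evalFrom S (a :: w) = A.evalFrom (A.stepSet S a) w := rfl
    rw [h1, ih]
    constructor
    · rintro ⟨r, hr, hq⟩
      rw [NFA.mem_stepSet] at hr
      rcases hr with ⟨s, hs, hr⟩
      refine ⟨s, hs, ?_⟩
      rw [show A.evalFrom {s} (a :: w) = A.evalFrom (A.stepSet {s} a) w from rfl,
        ih]
      exact ⟨r, by rw [NFA.mem_stepSet]; exact ⟨s, rfl, hr⟩, hq⟩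
    · rintro ⟨s, hs, hq⟩
      rw [show A.evalFrom {s} (a :: w) = A.evalFrom (A.stepSet {s} a) w from rfl, ih] at hq
      rcases hq with ⟨r, hr, hq⟩
      rw [NFA.mem_stepSet] at hr
      rcases hr with ⟨s', hs', hr⟩
      have hss : s' = s := hs'
      subst hss
      exact ⟨r, by rw [NFA.mem_stepSet]; exact ⟨s', hs, hr⟩, hq⟩

theorem evalFrom_append (S : Set σ) (x y : List α) :
    A.evalFrom S (x ++ y) = A.evalFrom (A.evalFrom S x) y := by
  show List.foldl _ _ _ = _
  rw [List.foldl_append]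
  rfl

theorem reach_trans {p q r : σ} (h1 : nfaReach A p q) (h2 : nfaReach A q r) :
    nfaReach A p r := by
  rcases h1 with ⟨x, hx⟩
  rcases h2 with ⟨y, hy⟩
  refine ⟨x ++ y, ?_⟩
  rw [evalFrom_append]
  rw [evalFrom_mem_iff]
  exact ⟨q, hx, hy⟩

theorem reach_refl (p : σ) : nfaReach A p p := ⟨[], rfl⟩

/-- UMS: each state is maximal in its own graph. -/
theorem self_maximal (hums : HasUMS A) (p : σ) :
    IsMaximalIn A (selfLoopLetters A p) p :=
  (hums p p Relation.ReflTransGen.refl).2 rfl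

theorem reach_of_reachIn {Γ : Set α} {p q : σ} (h : reachIn A Γ p q) : nfaReach A p q := by
  induction h with
  | refl => exact reach_refl A p
  | @tail b c hpb hbc ih =>
    rcases hbc with ⟨a, _, hmem⟩
    refine reach_trans A ih ⟨[a], ?_⟩
    show c ∈ A.stepSet {b} a
    rw [NFA.mem_stepSet]
    exact ⟨b, rfl, hmem⟩

/-- KEY: with UMS + partial order, self-loop letters give deterministic self-loops. -/
theorem step_collapse (hpo : IsPartiallyOrderedNFA A) (hums : HasUMS A)
    {p : σ} {a : α} (ha : a ∈ selfLoopLetters A p) : A.step p a = {p} := by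
  apply Set.eq_of_subset_of_subset
  · intro r hr
    have h1 : reachIn A (selfLoopLetters A p) p r :=
      Relation.ReflTransGen.single ⟨a, ha, hr⟩
    have h2 := self_maximal A hums p r h1
    have : r = p := hpo r p (reach_of_reachIn A h2) (reach_of_reachIn A h1)
    exact this
  · intro r hr
    have : r = p := hr
    subst this
    exact ha

/-- reading a word all of whose letters self-loop at q stays at q -/
theorem evalFrom_stable (hpo : IsPartiallyOrderedNFA A) (hums : HasUMS A)
    {q : σ} {w : List α} (hw : ∀ a ∈ w, a ∈ selfLoopLetters A q) :
    A.evalFrom {q} w = {q} := by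
  induction w with
  | nil => rfl
  | cons a w ih =>
    have h1 : A.evalFrom {q} (a :: w) = A.evalFrom (A.stepSet {q} a) w := rfl
    have h2 : A.stepSet {q} a = {q} := by
      have : A.stepSet {q} a = A.step q a := by
        ext r
        rw [NFA.mem_stepSet]
        constructor
        · rintro ⟨s, hs, h⟩
          have : s = q := hs
          subst this; exact h
        · intro h; exact ⟨q, rfl, h⟩
      rw [this, step_collapse A hpo hums (hw a (by simp))]
    rw [h1, h2]
    exact ih (fun b hb => hw b (by simp [hb]))

end PTback

namespace PTback
open PTaux

variable {α : Type*} {σ : Type*} (A : NFA α σ)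

theorem stepSet_singleton (s : σ) (a : α) : A.stepSet {s} a = A.step s a := by
  ext r
  rw [NFA.mem_stepSet]
  constructor
  · rintro ⟨t, ht, h⟩
    have : t = s := ht
    subst this; exact h
  · intro h; exact ⟨s, rfl, h⟩

theorem evalFrom_cons (X : Set σ) (a : α) (w : List α) :
    A.evalFrom X (a :: w) = A.evalFrom (A.stepSet X a) w := rfl

/-- completeness propagates nonemptiness -/
theorem evalFrom_nonempty (hc : IsCompleteNFA A) {X : Set σ} (hX : X.Nonempty) (w : List α) :
    (A.evalFrom X w).Nonempty := by
  induction w generalizing X with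
  | nil => exact hX
  | cons a w ih =>
    rw [evalFrom_cons]
    refine ih ?_
    rcases hX with ⟨s, hs⟩
    rcases hc s a with ⟨r, hr⟩
    refine ⟨r, ?_⟩
    rw [NFA.mem_stepSet]
    exact ⟨s, hs, hr⟩

/-- letters along a loop at `q` are self-loop letters of `q` -/
theorem loop_letters (hpo : IsPartiallyOrderedNFA A) {q : σ} {w : List α}
    (h : q ∈ A.evalFrom {q} w) : ∀ c ∈ w, c ∈ selfLoopLetters A q := by
  induction w using List.reverseRecOn with
  | nil => intro c hc; simp at hc
  | append_singleton w c ih =>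
    intro d hd
    rw [evalFrom_append] at h
    rcases (evalFrom_mem_iff A _ _ _).1 h with ⟨r, hr, hq⟩
    have h1 : q ∈ A.step r c := by
      have := hq
      rw [show A.evalFrom {r} [c] = A.stepSet {r} c from rfl, stepSet_singleton] at this
      exact this
    have hrq : r = q := by
      refine hpo r q ⟨[c], ?_⟩ ⟨w, hr⟩
      rw [show A.evalFrom {r} [c] = A.stepSet {r} c from rfl, stepSet_singleton]
      exact h1
    subst hrq
    rcases List.mem_append.1 hd with hd | hd
    · exact ih hr d hd
    · have : d = c := by simpa using hd
      subst this
      exact h1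

/-- word-paths over `Δ` give `reachIn` -/
theorem reachIn_of_word {Δ : Set α} {s q : σ} {w : List α} (hw : ∀ c ∈ w, c ∈ Δ)
    (h : q ∈ A.evalFrom {s} w) : reachIn A Δ s q := by
  induction w using List.reverseRecOn generalizing q with
  | nil =>
    have : q = s := h
    subst this; exact Relation.ReflTransGen.refl
  | append_singleton w c ih =>
    rw [evalFrom_append] at h
    rcases (evalFrom_mem_iff A _ _ _).1 h with ⟨r, hr, hq⟩
    have h1 : q ∈ A.step r c := by
      rw [show A.evalFrom {r} [c] = A.stepSet {r} c from rfl, stepSet_singleton] at hq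
      exact hq
    refine Relation.ReflTransGen.tail (ih (fun d hd => hw d (by simp [hd])) hr) ?_
    exact ⟨c, hw c (by simp), h1⟩

theorem reachIn_mono {Δ Δ' : Set α} (hΔ : Δ ⊆ Δ') {s q : σ} (h : reachIn A Δ s q) :
    reachIn A Δ' s q := by
  refine Relation.ReflTransGen.mono ?_ _ _ h
  rintro x y ⟨a, ha, h⟩
  exact ⟨a, hΔ ha, h⟩

theorem sameComponent_symm {Δ : Set α} : Symmetric (sameComponent A Δ) := by
  have hsym : Symmetric (fun x y => edgeRel A Δ x y ∨ edgeRel A Δ y x) :=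
    fun x y h => h.symm
  haveI : Std.Symm (fun x y => edgeRel A Δ x y ∨ edgeRel A Δ y x) := ⟨fun x y h => hsym h⟩
  exact fun x y h => Std.Symm.symm (r := Relation.ReflTransGen (fun x y => edgeRel A Δ x y ∨ edgeRel A Δ y x)) x y h

theorem sameComponent_trans {Δ : Set α} {x y z : σ} (h1 : sameComponent A Δ x y)
    (h2 : sameComponent A Δ y z) : sameComponent A Δ x z :=
  Relation.ReflTransGen.trans h1 h2

theorem sameComponent_of_reachIn {Δ : Set α} {x y : σ} (h : reachIn A Δ x y) :
    sameComponent A Δ x y :=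
  Relation.ReflTransGen.mono (fun _ _ h => Or.inl h) _ _ h

/-- in a finite poset of states, a maximal state is reachable -/
theorem exists_maximal [Fintype σ] (hpo : IsPartiallyOrderedNFA A) (Δ : Set α) (q : σ) :
    ∃ m, reachIn A Δ q m ∧ IsMaximalIn A Δ m := by
  classical
  have main : ∀ (N : ℕ) (q : σ), ({r | reachIn A Δ q r}.ncard ≤ N) →
      ∃ m, reachIn A Δ q m ∧ IsMaximalIn A Δ m := by
    intro N
    induction N with
    | zero =>
      intro q hq
      exfalso
      have h1 : q ∈ {r | reachIn A Δ q r} := Relation.ReflTransGen.refl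
      have h2 : {r | reachIn A Δ q r}.Nonempty := ⟨q, h1⟩
      have := Set.ncard_pos (Set.toFinite _) |>.2 h2
      omega
    | succ N ih =>
      intro q hq
      by_cases hmax : IsMaximalIn A Δ q
      · exact ⟨q, Relation.ReflTransGen.refl, hmax⟩
      · rw [IsMaximalIn] at hmax
        push_neg at hmax
        rcases hmax with ⟨r, hqr, hnr⟩
        have hsub : {x | reachIn A Δ r x} ⊂ {x | reachIn A Δ q x} := by
          constructor
          · intro x hx
            exact Relation.ReflTransGen.trans hqr hx
          · intro hcon
            exact hnr (hcon (show q ∈ {x | reachIn A Δ q x} from Relation.ReflTransGen.refl))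
        have hcard : {x | reachIn A Δ r x}.ncard < {x | reachIn A Δ q x}.ncard :=
          Set.ncard_lt_ncard hsub (Set.toFinite _)
        rcases ih r (by omega) with ⟨m, hm1, hm2⟩
        exact ⟨m, Relation.ReflTransGen.trans hqr hm1, hm2⟩
  exact main ({r | reachIn A Δ q r}.ncard) q le_rfl

/-- the stabilization predicate -/
def Stab (Δ : Set α) (s q : σ) : Prop :=
  (∃ w : List α, (∀ c ∈ w, c ∈ Δ) ∧ q ∈ A.evalFrom {s} w) ∧ Δ ⊆ selfLoopLetters A q

/-- uniqueness of the stabilization state -/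
theorem stab_unique [Fintype σ] (hpo : IsPartiallyOrderedNFA A) (hums : HasUMS A)
    {Δ : Set α} {s q₁ q₂ : σ} (h1 : Stab A Δ s q₁) (h2 : Stab A Δ s q₂) : q₁ = q₂ := by
  rcases h1 with ⟨⟨w₁, hw₁, hq₁⟩, hst₁⟩
  rcases h2 with ⟨⟨w₂, hw₂, hq₂⟩, hst₂⟩
  have key : ∀ {x y : σ}, (∃ w, (∀ c ∈ w, c ∈ Δ) ∧ x ∈ A.evalFrom {s} w) →
      (∃ w, (∀ c ∈ w, c ∈ Δ) ∧ y ∈ A.evalFrom {s} w) →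
      Δ ⊆ selfLoopLetters A x → Δ ⊆ selfLoopLetters A y → nfaReach A y x := by
    rintro x y ⟨wx, hwx, hx⟩ ⟨wy, hwy, hy⟩ hsx _
    have r1 : reachIn A (selfLoopLetters A x) s x :=
      reachIn_mono A hsx (reachIn_of_word A hwx hx)
    have r2 : reachIn A (selfLoopLetters A x) s y :=
      reachIn_mono A hsx (reachIn_of_word A hwy hy)
    have hcomp : sameComponent A (selfLoopLetters A x) x y :=
      sameComponent_trans A (sameComponent_symm A (sameComponent_of_reachIn A r1))
        (sameComponent_of_reachIn A r2)
    rcases exists_maximal A hpo (selfLoopLetters A x) y with ⟨m, hym, hmax⟩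
    have hcomp' : sameComponent A (selfLoopLetters A x) x m :=
      sameComponent_trans A hcomp (sameComponent_of_reachIn A hym)
    have hmx : m = x := (hums x m hcomp').1 hmax
    subst hmx
    exact reach_of_reachIn A hym
  have hr1 : nfaReach A q₂ q₁ := key ⟨w₁, hw₁, hq₁⟩ ⟨w₂, hw₂, hq₂⟩ hst₁ hst₂
  have hr2 : nfaReach A q₁ q₂ := key ⟨w₂, hw₂, hq₂⟩ ⟨w₁, hw₁, hq₁⟩ hst₂ hst₁
  exact hpo q₁ q₂ hr2 hr1

end PTback

namespace PTback2
open PTaux PTback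

variable {α : Type*} {σ : Type*} (A : NFA α σ)

theorem pw_letters2 {γ : List α} : ∀ {m : ℕ} {c : α}, c ∈ pw γ m → c ∈ γ := by
  intro m
  induction m with
  | zero => intro c hc; simp [pw] at hc
  | succ m ih =>
    intro c hc
    rcases List.mem_append.1 hc with h | h
    · exact h
    · exact ih h

theorem pw_length (g : List α) : ∀ m, (pw g m).length = m * g.length := by
  intro m
  induction m with
  | zero => simp [pw]
  | succ m ih =>
    show (g ++ pw g m).length = _
    rw [List.length_append, ih]
    ring

/-- extraction of the chain of block-boundary states -/
theorem chain_exists (g : List α) :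
    ∀ (m : ℕ) (s q : σ), q ∈ A.evalFrom {s} (pw g m) →
      ∃ r : ℕ → σ, r 0 = s ∧ r m = q ∧ ∀ i < m, r (i + 1) ∈ A.evalFrom {r i} g := by
  intro m
  induction m with
  | zero =>
    intro s q hq
    have : q = s := hq
    subst this
    exact ⟨fun _ => q, rfl, rfl, fun i hi => absurd hi (by omega)⟩
  | succ m ih =>
    intro s q hq
    rw [show pw g (m+1) = g ++ pw g m from rfl, evalFrom_append] at hq
    rcases (evalFrom_mem_iff A _ _ _).1 hq with ⟨s', hs', hq'⟩
    rcases ih s' q hq' with ⟨r', hr0, hrm, hrstep⟩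
    refine ⟨fun i => if i = 0 then s else r' (i - 1), by simp, by simp [hrm], ?_⟩
    intro i hi
    rcases Nat.eq_zero_or_pos i with rfl | hipos
    · simpa [hr0] using hs'
    · have h1 : i + 1 - 1 = i := by omega
      have h2 : ¬ (i + 1 = 0) := by omega
      have h3 : ¬ (i = 0) := by omega
      simp only [h1, h2, h3, if_false]
      have h4 : i - 1 + 1 = i := by omega
      have := hrstep (i - 1) (by omega)
      rwa [h4] at this

/-- composing chain steps -/
theorem chain_comp (g : List α) (r : ℕ → σ) (m : ℕ)
    (hrstep : ∀ i < m, r (i + 1) ∈ A.evalFrom {r i} g) :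
    ∀ (d i : ℕ), i + d ≤ m → r (i + d) ∈ A.evalFrom {r i} (pw g d) := by
  intro d
  induction d with
  | zero => intro i _; exact rfl
  | succ d ih =>
    intro i hi
    rw [show pw g (d+1) = g ++ pw g d from rfl, evalFrom_append, evalFrom_mem_iff]
    refine ⟨r (i+1), hrstep i (by omega), ?_⟩
    have := ih (i+1) (by omega)
    rwa [show i + 1 + d = i + (d+1) by omega] at this

/-- every endpoint of a long two-letter alternation is the stabilization state -/
theorem stall [Fintype σ] (hpo : IsPartiallyOrderedNFA A) (hums : HasUMS A) (a b : α) (s : σ)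
    {q : σ} (hq : q ∈ A.evalFrom {s} (pw [a, b] (Fintype.card σ + 1))) :
    Stab A {a, b} s q := by
  classical
  set n := Fintype.card σ with hn
  rcases chain_exists A [a,b] (n+1) s q hq with ⟨r, hr0, hrm, hrstep⟩
  -- pigeonhole on boundary states
  have hcard : Fintype.card σ < Fintype.card (Fin (n + 2)) := by
    simp [hn]
  obtain ⟨i, j, hij, hrij⟩ := Fintype.exists_ne_map_eq_of_card_lt
    (fun i : Fin (n + 2) => r i) hcard
  -- wlog i < j
  have main : ∀ (i j : ℕ), i < j → j ≤ n + 1 → r i = r j → Stab A {a, b} s q := by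
    intro i j hlt hle hr
    have hloop : r j ∈ A.evalFrom {r i} (pw [a,b] (j - i)) := by
      have := chain_comp A [a,b] r (n+1) hrstep (j - i) i (by omega)
      rwa [show i + (j - i) = j by omega] at this
    rw [← hr] at hloop
    have hlet : ∀ c ∈ pw ([a,b] : List α) (j - i), c ∈ selfLoopLetters A (r i) :=
      loop_letters A hpo hloop
    have hab_mem : ∀ c ∈ ([a, b] : List α), c ∈ selfLoopLetters A (r i) := by
      intro c hc
      refine hlet c ?_
      have h1 : pw ([a,b] : List α) (j - i) = [a,b] ++ pw [a,b] (j - i - 1) := by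
        rw [show j - i = (j - i - 1) + 1 by omega]
        rfl
      rw [h1]
      exact List.mem_append_left _ hc
    have hstable : ∀ c ∈ pw ([a,b] : List α) (n + 1 - j), c ∈ selfLoopLetters A (r j) := by
      intro c hc
      rw [← hr]
      exact hab_mem c (pw_letters2 hc)
    have hqrj : q = r j := by
      have h1 : r (n+1) ∈ A.evalFrom {r j} (pw [a,b] (n + 1 - j)) := by
        have := chain_comp A [a,b] r (n+1) hrstep (n + 1 - j) j (by omega)
        rwa [show j + (n + 1 - j) = n + 1 by omega] at this
      rw [evalFrom_stable A hpo hums hstable] at h1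
      rw [← hrm]
      exact h1
    constructor
    · refine ⟨pw [a,b] i, ?_, ?_⟩
      · intro c hc
        have := pw_letters2 hc
        simp only [List.mem_cons, List.mem_singleton] at this
        rcases this with rfl | h
        · exact Set.mem_insert _ _
        · simp at h; subst h; exact Set.mem_insert_of_mem _ rfl
      · have := chain_comp A [a,b] r (n+1) hrstep i 0 (by omega)
        rw [hqrj, ← hr]
        simpa [hr0] using this
    · intro c hc
      rw [hqrj, ← hr]
      rcases hc with rfl | hc
      · exact hab_mem c (by simp)
      · simp at hc; subst hc; exact hab_mem _ (by simp)
  rcases Nat.lt_trichotomy (i : ℕ) (j : ℕ) with hlt | heq | hgt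
  · exact main i j hlt (by omega) hrij
  · exact absurd (Fin.ext heq) hij
  · exact main j i hgt (by omega) hrij.symm

end PTback2

namespace PTmain
open PTaux PTback PTback2

variable {α : Type*} {σ : Type*} (A : NFA α σ)

theorem glue {X : Set σ} {w w' : List α}
    (h : ∀ r ∈ X, A.evalFrom {r} w = A.evalFrom {r} w') :
    A.evalFrom X w = A.evalFrom X w' := by
  ext q
  rw [evalFrom_mem_iff, evalFrom_mem_iff]
  constructor
  · rintro ⟨s, hs, hq⟩
    exact ⟨s, hs, by rw [← h s hs]; exact hq⟩
  · rintro ⟨s, hs, hq⟩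
    exact ⟨s, hs, by rw [h s hs]; exact hq⟩

theorem two_power_eq [Fintype σ] (hc : IsCompleteNFA A) (hpo : IsPartiallyOrderedNFA A)
    (hums : HasUMS A) (a b : α) (s : σ) :
    A.evalFrom {s} (pw [a, b] (Fintype.card σ + 1)) =
      A.evalFrom {s} (pw [b, a] (Fintype.card σ + 1)) := by
  have h1 : (A.evalFrom {s} (pw [a, b] (Fintype.card σ + 1))).Nonempty :=
    evalFrom_nonempty A hc (Set.singleton_nonempty s) _
  have h2 : (A.evalFrom {s} (pw [b, a] (Fintype.card σ + 1))).Nonempty :=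
    evalFrom_nonempty A hc (Set.singleton_nonempty s) _
  rcases h1 with ⟨q₁, hq₁⟩
  rcases h2 with ⟨q₂, hq₂⟩
  have hs₁ : Stab A {a, b} s q₁ := stall A hpo hums a b s hq₁
  have hs₂ : Stab A {a, b} s q₂ := by
    have := stall A hpo hums b a s hq₂
    rwa [Set.pair_comm b a] at this
  have h12 : q₁ = q₂ := stab_unique A hpo hums hs₁ hs₂
  apply Set.eq_of_subset_of_subset
  · intro x hx
    have : Stab A {a,b} s x := stall A hpo hums a b s hx
    rw [stab_unique A hpo hums this hs₂]
    exact hq₂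
  · intro x hx
    have : Stab A {a,b} s x := by
      have := stall A hpo hums b a s hx
      rwa [Set.pair_comm b a] at this
    rw [stab_unique A hpo hums this hs₁]
    exact hq₁

/-- decomposition at the first letter outside `Γ` -/
theorem decomp (Γ : Set α) (u : List α) :
    (∀ c ∈ u, c ∈ Γ) ∨ ∃ P c S, u = P ++ c :: S ∧ c ∉ Γ ∧ ∀ d ∈ P, d ∈ Γ := by
  classical
  induction u with
  | nil => exact Or.inl (fun c hc => absurd hc (List.not_mem_nil (a := c)))
  | cons e u ih =>
    by_cases he : e ∈ Γ
    · rcases ih with h | ⟨P, c, S, rfl, hc, hP⟩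
      · refine Or.inl ?_
        intro c hc
        rcases List.mem_cons.1 hc with rfl | hc
        · exact he
        · exact h c hc
      · refine Or.inr ⟨e :: P, c, S, rfl, hc, ?_⟩
        intro d hd
        rcases List.mem_cons.1 hd with rfl | hd
        · exact he
        · exact hP d hd
    · exact Or.inr ⟨[], e, u, rfl, he, fun d hd => absurd hd (List.not_mem_nil (a := d))⟩

/-- decomposition at the first occurrence of a given letter -/
theorem first_occ {b : α} {X : List α} (h : b ∈ X) :
    ∃ Z S, X = Z ++ b :: S ∧ b ∉ Z := by
  classical
  induction X with
  | nil => simp at h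
  | cons e X ih =>
    by_cases hb : b = e
    · exact ⟨[], X, by rw [hb]; rfl, by simp⟩
    · have : b ∈ X := by
        rcases List.mem_cons.1 h with h' | h'
        · exact absurd h' hb
        · exact h'
      rcases ih this with ⟨Z, S, rfl, hZ⟩
      exact ⟨e :: Z, S, rfl, by
        intro hc
        rcases List.mem_cons.1 hc with h' | h'
        · exact hb h'
        · exact hZ h'⟩

/-- the "height" of a state: the size of its up-set -/
noncomputable def ht (s : σ) : ℕ := {r | nfaReach A s r}.ncard

theorem ht_lt [Fintype σ] (hpo : IsPartiallyOrderedNFA A) {s : σ} {a : α}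
    (ha : a ∉ selfLoopLetters A s) {r : σ} (hr : r ∈ A.step s a) : ht A r < ht A s := by
  have hsub : {x | nfaReach A r x} ⊂ {x | nfaReach A s x} := by
    have hsr : nfaReach A s r := by
      refine ⟨[a], ?_⟩
      rw [show A.evalFrom {s} [a] = A.stepSet {s} a from rfl, stepSet_singleton]
      exact hr
    constructor
    · intro x hx
      exact reach_trans A hsr hx
    · intro hcon
      have h1 : s ∈ {x | nfaReach A s x} := reach_refl A s
      have h2 : nfaReach A r s := hcon h1
      have : s = r := hpo s r hsr h2
      subst this
      exact ha hr
  exact Set.ncard_lt_ncard hsub (Set.toFinite _)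

theorem ht_le_card [Fintype σ] (s : σ) : ht A s ≤ Fintype.card σ := by
  have h1 : {r | nfaReach A s r} ⊆ Set.univ := Set.subset_univ _
  calc ht A s ≤ (Set.univ : Set σ).ncard := Set.ncard_le_ncard h1 Set.finite_univ
    _ = Fintype.card σ := by rw [Set.ncard_univ, Nat.card_eq_fintype_card]

end PTmain

namespace PTmain2
open List PTaux PTback PTback2 PTmain

variable {α : Type*} {σ : Type*}

/-- the `R3` exchange lemma: tails after the first crossing occurrences are equivalent -/
theorem R3_lemma {α : Type*} {K : ℕ} (hK : 2 ≤ K) {a b : α} {P Z U2 Q Z' V2 : List α}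
    (hfu : b ∉ P ++ a :: Z) (hfv : a ∉ Q ++ b :: Z')
    (huv : kEquiv K (P ++ a :: (Z ++ b :: U2)) (Q ++ b :: (Z' ++ a :: V2))) :
    kEquiv (K - 2) U2 V2 := by
  have hufor : P ++ a :: (Z ++ b :: U2) = (P ++ a :: Z) ++ b :: U2 := by simp
  have hvfor : Q ++ b :: (Z' ++ a :: V2) = (Q ++ b :: Z') ++ a :: V2 := by simp
  have dir1 : ∀ x : List α, x.length ≤ K - 2 → x <+ U2 → x <+ V2 := by
    intro x hl hx
    have h1 : a :: (b :: x) <+ P ++ a :: (Z ++ b :: U2) :=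
      sublist_build (sublist_build hx)
    have h2 : (a :: b :: x).length ≤ K := by simp; omega
    have h3 : a :: (b :: x) <+ Q ++ b :: (Z' ++ a :: V2) :=
      (kEquiv_sublist_iff huv h2).1 h1
    rw [hvfor] at h3
    have h4 : b :: x <+ V2 := sublist_cut hfv h3
    exact (List.sublist_cons_self b x).trans h4
  have dir2 : ∀ x : List α, x.length ≤ K - 2 → x <+ V2 → x <+ U2 := by
    intro x hl hx
    have h1 : b :: (a :: x) <+ Q ++ b :: (Z' ++ a :: V2) :=
      sublist_build (sublist_build hx)
    have h2 : (b :: a :: x).length ≤ K := by simp; omega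
    have h3 : b :: (a :: x) <+ P ++ a :: (Z ++ b :: U2) :=
      (kEquiv_sublist_iff huv h2).2 h1
    rw [hufor] at h3
    have h4 : a :: x <+ U2 := sublist_cut hfu h3
    exact (List.sublist_cons_self a x).trans h4
  apply Set.eq_of_subset_of_subset
  · rintro x ⟨hl, hx⟩; exact ⟨hl, dir1 x hl hx⟩
  · rintro x ⟨hl, hx⟩; exact ⟨hl, dir2 x hl hx⟩

/-- the sibling lemma: the two distinct first exit letters act equivalently on the common tail -/
theorem sibling_lemma {α : Type*} {K : ℕ} (hK : 2 ≤ K) {a b : α} (hab : a ≠ b)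
    {P Z U2 Q Z' V2 : List α}
    (hfu : b ∉ P ++ a :: Z) (hfv : a ∉ Q ++ b :: Z')
    (huv : kEquiv K (P ++ a :: (Z ++ b :: U2)) (Q ++ b :: (Z' ++ a :: V2))) :
    kEquiv (K - 2) (a :: V2) (b :: V2) := by
  have hufor : P ++ a :: (Z ++ b :: U2) = (P ++ a :: Z) ++ b :: U2 := by simp
  have hvfor : Q ++ b :: (Z' ++ a :: V2) = (Q ++ b :: Z') ++ a :: V2 := by simp
  have R3 := R3_lemma hK hfu hfv huv
  have dir1 : ∀ x : List α, x.length ≤ K - 2 → x <+ a :: V2 → x <+ b :: V2 := by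
    intro x hl hx
    rcases sublist_cons_cases hx with h' | ⟨x', rfl, hx'⟩
    · exact h'.trans (List.sublist_cons_self b V2)
    · have h1 : b :: (a :: x') <+ Q ++ b :: (Z' ++ a :: V2) :=
        sublist_build (sublist_build hx')
      have h2 : (b :: a :: x').length ≤ K := by simp at hl ⊢; omega
      have h3 : b :: (a :: x') <+ P ++ a :: (Z ++ b :: U2) :=
        (kEquiv_sublist_iff huv h2).2 h1
      rw [hufor] at h3
      have h4 : a :: x' <+ U2 := sublist_cut hfu h3
      have h5 : a :: x' <+ V2 := by
        refine (kEquiv_sublist_iff R3 ?_).1 h4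
        simpa using hl
      exact h5.trans (List.sublist_cons_self b V2)
  have dir2 : ∀ x : List α, x.length ≤ K - 2 → x <+ b :: V2 → x <+ a :: V2 := by
    intro x hl hx
    rcases sublist_cons_cases hx with h' | ⟨x', rfl, hx'⟩
    · exact h'.trans (List.sublist_cons_self a V2)
    · have h0 : x' <+ U2 := by
        refine (kEquiv_sublist_iff R3 ?_).2 hx'
        simp at hl; omega
      have h1 : a :: (b :: x') <+ P ++ a :: (Z ++ b :: U2) :=
        sublist_build (sublist_build h0)
      have h2 : (a :: b :: x').length ≤ K := by simp at hl ⊢; omega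
      have h3 : a :: (b :: x') <+ Q ++ b :: (Z' ++ a :: V2) :=
        (kEquiv_sublist_iff huv h2).1 h1
      rw [hvfor] at h3
      have h4 : b :: x' <+ V2 := sublist_cut hfv h3
      exact h4.trans (List.sublist_cons_self a V2)
  apply Set.eq_of_subset_of_subset
  · rintro x ⟨hl, hx⟩; exact ⟨hl, dir1 x hl hx⟩
  · rintro x ⟨hl, hx⟩; exact ⟨hl, dir2 x hl hx⟩

end PTmain2

namespace PTfinal
open List PTaux PTback PTback2 PTmain PTmain2

variable {α : Type*} {σ : Type*}

theorem main [Fintype σ] (A : NFA α σ) (hc : IsCompleteNFA A)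
    (hpo : IsPartiallyOrderedNFA A) (hums : HasUMS A) :
    ∀ (h : ℕ) (s : σ), ht A s ≤ h → ∀ u v : List α,
      kEquiv (1 + h * (2 * Fintype.card σ + 4)) u v →
      A.evalFrom {s} u = A.evalFrom {s} v := by
  have hn : Fintype.card σ = Fintype.card σ := rfl
  intro h
  induction h with
  | zero =>
    intro s hs u v _
    exfalso
    have h1 : s ∈ {r | nfaReach A s r} := reach_refl A s
    have h2 : 0 < {r | nfaReach A s r}.ncard :=
      (Set.ncard_pos (Set.toFinite _)).2 ⟨s, h1⟩
    have h3 : ht A s = {r | nfaReach A s r}.ncard := rfl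
    omega
  | succ h ih =>
    intro s hs u v huv
    set n := Fintype.card σ with hndef
    obtain ⟨M, hM⟩ : ∃ M, M = h * (2 * n + 4) := ⟨_, rfl⟩
    have harith : 1 + (h+1) * (2 * n + 4) = 1 + M + (2*n + 4) := by rw [hM]; ring
    rw [harith] at huv
    set K := 1 + M + (2*n+4) with hKdef
    have hK2 : 2 ≤ K := by omega
    have hih : ∀ (r : σ), ht A r ≤ h → ∀ u' v' : List α, kEquiv (1 + M) u' v' →
        A.evalFrom {r} u' = A.evalFrom {r} v' := by
      intro r hr u' v' h'
      exact ih r hr u' v' (by rw [hM] at h'; exact h')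
    have halph : ∀ c, c ∈ u ↔ c ∈ v := kEquiv_mem_iff huv (by omega)
    rcases decomp (selfLoopLetters A s) u with hu | ⟨P, a, X, rfl, haΓ, hPΓ⟩
    · have hv : ∀ c ∈ v, c ∈ selfLoopLetters A s := fun c hc => hu c ((halph c).2 hc)
      rw [evalFrom_stable A hpo hums hu, evalFrom_stable A hpo hums hv]
    rcases decomp (selfLoopLetters A s) v with hv | ⟨Q, b, Y, rfl, hbΓ, hQΓ⟩
    · exfalso
      exact haΓ (hv a ((halph a).1 (by simp)))
    have hstepht : ∀ (c : α), c ∉ selfLoopLetters A s → ∀ r ∈ A.step s c, ht A r ≤ h := by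
      intro c hcΓ r hr
      have h1 := ht_lt A hpo hcΓ hr
      omega
    have expandU : A.evalFrom {s} (P ++ a :: X) = A.evalFrom (A.step s a) X := by
      rw [evalFrom_append, evalFrom_stable A hpo hums hPΓ, evalFrom_cons, stepSet_singleton]
    have expandV : A.evalFrom {s} (Q ++ b :: Y) = A.evalFrom (A.step s b) Y := by
      rw [evalFrom_append, evalFrom_stable A hpo hums hQΓ, evalFrom_cons, stepSet_singleton]
    have haP : a ∉ P := fun hmem => haΓ (hPΓ a hmem)
    have hbQ : b ∉ Q := fun hmem => hbΓ (hQΓ b hmem)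
    by_cases hab : a = b
    · -- same first exit letter
      subst hab
      have hcut : kEquiv (K - 1) X Y := kEquiv_cut haP hbQ huv
      have hXY : kEquiv (1 + M) X Y := kEquiv_mono (by omega) hcut
      rw [expandU, expandV]
      exact glue A (fun r hr => hih r (hstepht a haΓ r hr) X Y hXY)
    · -- different first exit letters
      have hbX : b ∈ X := by
        have hbu : b ∈ P ++ a :: X := (halph b).2 (by simp)
        rcases List.mem_append.1 hbu with h' | h'
        · exact absurd (hPΓ b h') hbΓ
        · rcases List.mem_cons.1 h' with h'' | h''
          · exact absurd h''.symm hab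
          · exact h''
      have haY : a ∈ Y := by
        have hau : a ∈ Q ++ b :: Y := (halph a).1 (by simp)
        rcases List.mem_append.1 hau with h' | h'
        · exact absurd (hQΓ a h') haΓ
        · rcases List.mem_cons.1 h' with h'' | h''
          · exact absurd h'' hab
          · exact h''
      rcases first_occ hbX with ⟨Z, U2, rfl, hbZ⟩
      rcases first_occ haY with ⟨Z', V2, rfl, haZ'⟩
      have hfu : b ∉ P ++ a :: Z := by
        intro hmem
        rcases List.mem_append.1 hmem with h' | h'
        · exact hbΓ (hPΓ b h')
        · rcases List.mem_cons.1 h' with h'' | h''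
          · exact hab h''.symm
          · exact hbZ h''
      have hfv : a ∉ Q ++ b :: Z' := by
        intro hmem
        rcases List.mem_append.1 hmem with h' | h'
        · exact haΓ (hQΓ a h')
        · rcases List.mem_cons.1 h' with h'' | h''
          · exact hab h''
          · exact haZ' h''
      -- the cut relations
      have hvfor : Q ++ b :: (Z' ++ a :: V2) = (Q ++ b :: Z') ++ a :: V2 := by simp
      have hufor : P ++ a :: (Z ++ b :: U2) = (P ++ a :: Z) ++ b :: U2 := by simp
      have R1 : kEquiv (K - 1) (Z ++ b :: U2) V2 := by
        have h' := huv
        rw [hvfor] at h'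
        exact kEquiv_cut haP hfv h'
      have R2 : kEquiv (K - 1) (Z' ++ a :: V2) U2 := by
        have h' := huv.symm
        rw [hufor] at h'
        exact kEquiv_cut hbQ hfu h'
      have R3 : kEquiv (K - 2) U2 V2 := R3_lemma hK2 hfu hfv huv
      have hsib : kEquiv (K - 2) (a :: V2) (b :: V2) := sibling_lemma hK2 hab hfu hfv huv
      -- pads
      have hxletters : ∀ c ∈ (b :: pw [a, b] n : List α), c = a ∨ c = b := by
        intro c hcm
        rcases List.mem_cons.1 hcm with rfl | hcm
        · exact Or.inr rfl
        · have := pw_letters2 hcm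
          rcases List.mem_cons.1 this with rfl | h'
          · exact Or.inl rfl
          · simp at h'; exact Or.inr h'
      have hyletters : ∀ c ∈ (a :: pw [b, a] n : List α), c = b ∨ c = a := by
        intro c hcm
        rcases List.mem_cons.1 hcm with rfl | hcm
        · exact Or.inr rfl
        · have := pw_letters2 hcm
          rcases List.mem_cons.1 this with rfl | h'
          · exact Or.inl rfl
          · simp at h'; exact Or.inr h'
      have hxlen : (b :: pw [a, b] n : List α).length = 2 * n + 1 := by
        simp [pw_length]; ring
      have hylen : (a :: pw [b, a] n : List α).length = 2 * n + 1 := by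
        simp [pw_length]; ring
      have hpadx : kEquiv (1 + M) ((b :: pw [a, b] n) ++ V2) V2 := by
        have := kEquiv_pad hab hsib (b :: pw [a, b] n) hxletters
        rw [hxlen] at this
        exact kEquiv_mono (by omega) this
      have hpady : kEquiv (1 + M) ((a :: pw [b, a] n) ++ V2) V2 := by
        have := kEquiv_pad (Ne.symm hab) hsib.symm (a :: pw [b, a] n) hyletters
        rw [hylen] at this
        exact kEquiv_mono (by omega) this
      -- budgets for IH uses
      have hR1' : kEquiv (1 + M) (Z ++ b :: U2) V2 := kEquiv_mono (by omega) R1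
      have hR2' : kEquiv (1 + M) (Z' ++ a :: V2) U2 := kEquiv_mono (by omega) R2
      have hR3' : kEquiv (1 + M) U2 V2 := kEquiv_mono (by omega) R3
      -- left chain
      have chainL : A.evalFrom {s} (P ++ a :: (Z ++ b :: U2)) =
          A.evalFrom (A.evalFrom {s} (pw [a, b] (n + 1))) V2 := by
        calc A.evalFrom {s} (P ++ a :: (Z ++ b :: U2))
            = A.evalFrom (A.step s a) (Z ++ b :: U2) := expandU
          _ = A.evalFrom (A.step s a) V2 :=
              glue A (fun r hr => hih r (hstepht a haΓ r hr) _ _ hR1')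
          _ = A.evalFrom (A.step s a) ((b :: pw [a, b] n) ++ V2) :=
              glue A (fun r hr => hih r (hstepht a haΓ r hr) _ _ hpadx.symm)
          _ = A.evalFrom {s} (pw [a, b] (n + 1) ++ V2) := by
              rw [show pw ([a, b] : List α) (n+1) ++ V2 = a :: ((b :: pw [a, b] n) ++ V2) by
                  show ([a, b] ++ pw [a, b] n) ++ V2 = _
                  simp]
              rw [evalFrom_cons, stepSet_singleton]
          _ = A.evalFrom (A.evalFrom {s} (pw [a, b] (n + 1))) V2 := evalFrom_append A _ _ _
      have chainR : A.evalFrom {s} (Q ++ b :: (Z' ++ a :: V2)) =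
          A.evalFrom (A.evalFrom {s} (pw [b, a] (n + 1))) V2 := by
        calc A.evalFrom {s} (Q ++ b :: (Z' ++ a :: V2))
            = A.evalFrom (A.step s b) (Z' ++ a :: V2) := expandV
          _ = A.evalFrom (A.step s b) U2 :=
              glue A (fun r hr => hih r (hstepht b hbΓ r hr) _ _ hR2')
          _ = A.evalFrom (A.step s b) V2 :=
              glue A (fun r hr => hih r (hstepht b hbΓ r hr) _ _ hR3')
          _ = A.evalFrom (A.step s b) ((a :: pw [b, a] n) ++ V2) :=
              glue A (fun r hr => hih r (hstepht b hbΓ r hr) _ _ hpady.symm)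
          _ = A.evalFrom {s} (pw [b, a] (n + 1) ++ V2) := by
              rw [show pw ([b, a] : List α) (n+1) ++ V2 = b :: ((a :: pw [b, a] n) ++ V2) by
                  show ([b, a] ++ pw [b, a] n) ++ V2 = _
                  simp]
              rw [evalFrom_cons, stepSet_singleton]
          _ = A.evalFrom (A.evalFrom {s} (pw [b, a] (n + 1))) V2 := evalFrom_append A _ _ _
      rw [chainL, chainR, two_power_eq A hc hpo hums a b s]

end PTfinal

namespace PTfinal

theorem backward {α : Type*} {σ : Type*} [Fintype σ] (A : NFA α σ) (L : Language α)
    (hacc : A.accepts = L) (hc : IsCompleteNFA A) (hpo : IsPartiallyOrderedNFA A)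
    (hums : HasUMS A) : ∃ k : ℕ, IsPT k L := by
  refine ⟨1 + Fintype.card σ * (2 * Fintype.card σ + 4), ?_⟩
  intro u v huv
  have heval : A.evalFrom A.start u = A.evalFrom A.start v :=
    PTmain.glue A (fun s _ => main A hc hpo hums (Fintype.card σ) s (PTmain.ht_le_card A s) u v huv)
  rw [← hacc, NFA.mem_accepts, NFA.mem_accepts]
  show (∃ S ∈ A.accept, S ∈ A.evalFrom A.start u) ↔ ∃ S ∈ A.accept, S ∈ A.evalFrom A.start v
  rw [heval]

end PTfinal

/-- A regular language is piecewise testable iff it is recognized by a complete,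
partially ordered NFA satisfying the UMS property (Theorem 10 of the paper). -/
theorem stmt8 {α : Type*} [Fintype α] (L : Language α)
    (hreg : ∃ (σ : Type) (_ : Fintype σ) (D : DFA α σ), D.accepts = L) :
    (∃ k : ℕ, IsPT k L) ↔
      ∃ (σ : Type) (_ : Fintype σ) (A : NFA α σ),
        A.accepts = L ∧ IsCompleteNFA A ∧ IsPartiallyOrderedNFA A ∧ HasUMS A := by
  constructor
  · rintro ⟨k, hk⟩
    exact PTaux.forward L k hk
  · rintro ⟨σ, hfin, A, hacc, hcomp, hpo, hums⟩
    exact PTfinal.backward A L hacc hcomp hpo hums
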